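/- arXiv:2101.05628 — 5 statements merged into one kernel-verified Lean document; each statement's English description precedes it below -/
import Mathlib

section
/- The disutility function U is convex on the basic feasible set S₀; that is, ConvexOn ℝ S₀ U holds for the explicit function U(α) = θ_D·D(α)/D_MAX + θ_E·E(α)/E_MAX + θ_P·P(α)/P_MAX defined from the delay, energy and payment functions of the edge-cloud offloading model. -/
open Finset

noncomputable section

/-- Total offloading fraction `s(α) = Σ_j α_j`. -/
def sTot {N : ℕ} (α : Fin N → ℝ) : ℝ := ∑ j, α j

/-- Local computing delay contribution. -/
def Gfun {N : ℕ} (lam c f : ℝ) (α : Fin N → ℝ) : ℝ :=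
  (1 - sTot α) * c / (f - (1 - sTot α) * lam * c)

/-- Wireless transmission delay contribution. -/
def Hfun {N : ℕ} (lam z r Sbar : ℝ) (α : Fin N → ℝ) : ℝ :=
  sTot α * (lam * Sbar * sTot α / (2 * (1 - lam * z * sTot α / r)) + z / r)

/-- Expected total delay. -/
def Dfun {N : ℕ} (Nc : ℕ) (lam c z r f Sbar : ℝ) (fOSP w K : Fin N → ℝ)
    (α : Fin N → ℝ) : ℝ :=
  Gfun lam c f α + Hfun lam z r Sbar α + (∑ j, α j * w j) +
    (∑ j ∈ Finset.univ.filter (fun j : Fin N => (j : ℕ) < Nc), α j * c / fOSP j) +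
    (∑ j ∈ Finset.univ.filter (fun j : Fin N => Nc ≤ (j : ℕ)),
      α j * c / (fOSP j - K j - α j * lam * c))

/-- Expected energy consumption. -/
def Efun {N : ℕ} (lam c z r f Sbar εloc εtx : ℝ) (α : Fin N → ℝ) : ℝ :=
  εloc * Gfun lam c f α + εtx * Hfun lam z r Sbar α

/-- Expected payment. -/
def Pfun {N : ℕ} (lam c : ℝ) (price : Fin N → ℝ) (α : Fin N → ℝ) : ℝ :=
  ∑ j, α j * price j * c * lam

/-- Basic feasible set `S₀`. -/
def S0 {N : ℕ} (Nc : ℕ) (lam c z r f : ℝ) (fOSP K : Fin N → ℝ) :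
    Set (Fin N → ℝ) :=
  {α | (∀ j, 0 ≤ α j) ∧ sTot α ≤ 1 ∧ (1 - sTot α) * lam * c < f ∧
    lam * z * sTot α < r ∧ ∀ j : Fin N, Nc ≤ (j : ℕ) → K j + α j * lam * c < fOSP j}

/-- The disutility function `U`. -/
def Ufun {N : ℕ} (Nc : ℕ) (lam c z r f Sbar εloc εtx : ℝ) (fOSP w K price : Fin N → ℝ)
    (θD θE θP DMAX EMAX PMAX : ℝ) (α : Fin N → ℝ) : ℝ :=
  θD * Dfun Nc lam c z r f Sbar fOSP w K α / DMAX +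
    θE * Efun lam c z r f Sbar εloc εtx α / EMAX +
    θP * Pfun lam c price α / PMAX

/-! ### Auxiliary lemmas -/

private lemma inv_combo_le {X Y a b : ℝ} (hX : 0 < X) (hY : 0 < Y)
    (ha : 0 ≤ a) (hb : 0 ≤ b) (hab : a + b = 1) :
    (a * X + b * Y)⁻¹ ≤ a * X⁻¹ + b * Y⁻¹ := by
  have hb' : b = 1 - a := by linarith
  subst hb'
  have hXY : 0 < a * X + (1 - a) * Y := by
    rcases le_total X Y with h | h
    · nlinarith [mul_nonneg hb (sub_nonneg.2 h)]
    · nlinarith [mul_nonneg ha (sub_nonneg.2 h)]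
  have h1 : a * X⁻¹ + (1 - a) * Y⁻¹ = (a * Y + (1 - a) * X) / (X * Y) := by
    field_simp
  rw [h1, inv_eq_one_div, div_le_div_iff₀ hXY (mul_pos hX hY)]
  nlinarith [mul_nonneg (mul_nonneg ha hb) (sq_nonneg (X - Y))]

private lemma combo_lt {u v F a b : ℝ} (hu : u < F) (hv : v < F)
    (ha : 0 ≤ a) (hb : 0 ≤ b) (hab : a + b = 1) : a * u + b * v < F := by
  have hb' : b = 1 - a := by linarith
  subst hb'
  rcases lt_or_eq_of_le ha with h | h
  · nlinarith [mul_pos h (sub_pos.2 hu), mul_nonneg hb (sub_pos.2 hv).le]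
  · rw [← h]; ring_nf; linarith

private def AffCombo {N : ℕ} (L : (Fin N → ℝ) → ℝ) : Prop :=
  ∀ (x y : Fin N → ℝ) (a b : ℝ), a + b = 1 →
    L (a • x + b • y) = a * L x + b * L y

private lemma sTot_combo {N : ℕ} : AffCombo (sTot (N := N)) := by
  intro x y a b _
  simp only [sTot, Pi.add_apply, Pi.smul_apply, smul_eq_mul]
  rw [Finset.mul_sum, Finset.mul_sum, ← Finset.sum_add_distrib]

private lemma convexOn_of_affCombo {N : ℕ} {S : Set (Fin N → ℝ)} (hS : Convex ℝ S)
    {L : (Fin N → ℝ) → ℝ} (hL : AffCombo L) : ConvexOn ℝ S L :=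
  ⟨hS, fun x _ y _ a b _ _ hab => by
    rw [smul_eq_mul, smul_eq_mul, hL x y a b hab]⟩

private lemma convexOn_inv_affine {N : ℕ} {S : Set (Fin N → ℝ)} (hS : Convex ℝ S)
    {L : (Fin N → ℝ) → ℝ} (hL : AffCombo L) (hpos : ∀ α ∈ S, 0 < L α) :
    ConvexOn ℝ S (fun α => (L α)⁻¹) := by
  refine ⟨hS, fun x hx y hy a b ha hb hab => ?_⟩
  simp only [smul_eq_mul]
  rw [hL x y a b hab]
  exact inv_combo_le (hpos x hx) (hpos y hy) ha hb hab

private lemma convexOn_ratio {N : ℕ} {S : Set (Fin N → ℝ)} (hS : Convex ℝ S)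
    {t : (Fin N → ℝ) → ℝ} (ht : AffCombo t) (A lam c : ℝ)
    (hA : 0 ≤ A) (hlam : 0 < lam)
    (hpos : ∀ α ∈ S, 0 < A - t α * lam * c) :
    ConvexOn ℝ S (fun α => t α * c / (A - t α * lam * c)) := by
  have hLcombo : AffCombo (fun α => A - t α * lam * c) := by
    intro x y a b hab
    have hb' : b = 1 - a := by linarith
    subst hb'
    simp only
    rw [ht x y a (1 - a) hab]; ring
  have hbase := (convexOn_inv_affine hS hLcombo hpos).smul
    (c := A / lam) (by positivity)
  have haff : ConvexOn ℝ S (fun _ : Fin N → ℝ => -(1 / lam)) :=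
    convexOn_const _ hS
  refine (hbase.add haff).congr fun α hα => ?_
  have hd := hpos α hα
  simp only [Pi.add_apply, smul_eq_mul]
  field_simp
  have hd2 : A - lam * t α * c ≠ 0 := by
    intro h0; apply hd.ne'; linarith [h0]
  have hX : (A - lam * t α * c) * (A - lam * t α * c)⁻¹ = 1 := mul_inv_cancel₀ hd2
  linear_combination hX

private lemma S0_convex {N : ℕ} (Nc : ℕ) (lam c z r f : ℝ) (fOSP K : Fin N → ℝ) :
    Convex ℝ (S0 Nc lam c z r f fOSP K) := by
  intro x hx y hy a b ha hb hab
  obtain ⟨hx0, hx1, hx2, hx3, hx4⟩ := hx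
  obtain ⟨hy0, hy1, hy2, hy3, hy4⟩ := hy
  have hs : sTot (a • x + b • y) = a * sTot x + b * sTot y := sTot_combo x y a b hab
  refine ⟨fun j => ?_, ?_, ?_, ?_, fun j hj => ?_⟩
  · have h1 := hx0 j; have h2 := hy0 j
    simp only [Pi.add_apply, Pi.smul_apply, smul_eq_mul]
    positivity
  · rw [hs]
    nlinarith [mul_le_mul_of_nonneg_left hx1 ha, mul_le_mul_of_nonneg_left hy1 hb]
  · rw [hs]
    have h := combo_lt hx2 hy2 ha hb hab
    have heq : (1 - (a * sTot x + b * sTot y)) * lam * c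
        = a * ((1 - sTot x) * lam * c) + b * ((1 - sTot y) * lam * c) := by
      have hb' : b = 1 - a := by linarith
      subst hb'; ring
    rw [heq]; exact h
  · rw [hs]
    have h := combo_lt hx3 hy3 ha hb hab
    have heq : lam * z * (a * sTot x + b * sTot y)
        = a * (lam * z * sTot x) + b * (lam * z * sTot y) := by ring
    rw [heq]; exact h
  · have h := combo_lt (hx4 j hj) (hy4 j hj) ha hb hab
    simp only [Pi.add_apply, Pi.smul_apply, smul_eq_mul]
    have heq : K j + (a * x j + b * y j) * lam * c
        = a * (K j + x j * lam * c) + b * (K j + y j * lam * c) := by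
      have hb' : b = 1 - a := by linarith
      subst hb'; ring
    rw [heq]; exact h

private lemma convexOn_finset_sum {N : ℕ} {ι : Type*} {S : Set (Fin N → ℝ)}
    (hS : Convex ℝ S) (t : Finset ι) (g : ι → (Fin N → ℝ) → ℝ)
    (h : ∀ i ∈ t, ConvexOn ℝ S (g i)) :
    ConvexOn ℝ S (fun α => ∑ i ∈ t, g i α) := by
  classical
  induction t using Finset.induction with
  | empty => simpa using convexOn_const 0 hS
  | @insert i t hnot ih =>
    have h1 := h i (Finset.mem_insert_self i t)
    have h2 := ih fun j hj => h j (Finset.mem_insert_of_mem hj)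
    refine (h1.add h2).congr fun α _ => ?_
    simp [Finset.sum_insert hnot]


/-- The disutility function `U` is convex on the basic feasible set `S₀`. -/
theorem disutility_convexOn (N Nc : ℕ) (hN : 1 ≤ N) (hNc : Nc ≤ N)
    (lam c z r f Sbar : ℝ) (hlam : 0 < lam) (hc : 0 < c) (hz : 0 < z) (hr : 0 < r)
    (hf : 0 < f) (hSbar : 0 < Sbar)
    (εloc εtx : ℝ) (hεloc : 0 ≤ εloc) (hεtx : 0 ≤ εtx)
    (fOSP w K price : Fin N → ℝ)
    (hfOSP : ∀ j, 0 < fOSP j) (hw : ∀ j, 0 ≤ w j) (hprice : ∀ j, 0 ≤ price j)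
    (hK : ∀ j : Fin N, Nc ≤ (j : ℕ) → 0 ≤ K j ∧ K j < fOSP j)
    (θD θE θP : ℝ) (hθD : 0 ≤ θD) (hθE : 0 ≤ θE) (hθP : 0 ≤ θP)
    (DMAX EMAX PMAX : ℝ) (hDMAX : 0 < DMAX) (hEMAX : 0 < EMAX) (hPMAX : 0 < PMAX) :
    ConvexOn ℝ (S0 Nc lam c z r f fOSP K)
      (Ufun Nc lam c z r f Sbar εloc εtx fOSP w K price θD θE θP DMAX EMAX PMAX) := by
  set S := S0 Nc lam c z r f fOSP K with hSdef
  have hS : Convex ℝ S := S0_convex Nc lam c z r f fOSP K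
  -- G is convex
  have hGcombo : AffCombo (fun α : Fin N → ℝ => 1 - sTot α) := by
    intro x y a b hab
    have hb' : b = 1 - a := by linarith
    subst hb'
    simp only
    rw [sTot_combo x y a (1 - a) hab]; ring
  have hG : ConvexOn ℝ S (Gfun lam c f) := by
    have h := convexOn_ratio hS hGcombo f lam c hf.le hlam
      (fun α hα => sub_pos.2 hα.2.2.1)
    exact h.congr fun α _ => rfl
  -- H is convex
  have hH : ConvexOn ℝ S (Hfun lam z r Sbar) := by
    set k : ℝ := lam * z / r with hk
    have hk0 : 0 < k := by positivity
    have hLcombo : AffCombo (fun α : Fin N → ℝ => 1 - k * sTot α) := by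
      intro x y a b hab
      have hb' : b = 1 - a := by linarith
      subst hb'
      simp only
      rw [sTot_combo x y a (1 - a) hab]; ring
    have hpos : ∀ α ∈ S, 0 < 1 - k * sTot α := by
      intro α hα
      have h3 := hα.2.2.2.1
      rw [hk, div_mul_eq_mul_div, sub_pos, div_lt_one hr]
      linarith
    have hinv := (convexOn_inv_affine hS hLcombo hpos).smul
      (c := lam * Sbar / (2 * k ^ 2)) (by positivity)
    have haffc : AffCombo (fun α : Fin N → ℝ =>
        (lam * Sbar / (2 * k ^ 2)) * (1 - k * sTot α) - lam * Sbar / k ^ 2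
          + (z / r) * sTot α) := by
      intro x y a b hab
      have hb' : b = 1 - a := by linarith
      subst hb'
      simp only
      rw [sTot_combo x y a (1 - a) hab]; ring
    have haff := convexOn_of_affCombo hS haffc
    refine (hinv.add haff).congr fun α hα => ?_
    have hd := hpos α hα
    have hu : 1 - lam * z * sTot α / r = 1 - k * sTot α := by
      rw [hk]; ring
    simp only [Pi.add_apply, smul_eq_mul, Hfun]
    rw [hu]
    field_simp
    ring
  -- linear parts of D
  have hw' : ConvexOn ℝ S (fun α : Fin N → ℝ => ∑ j, α j * w j) := by
    refine convexOn_of_affCombo hS ?_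
    intro x y a b hab
    simp only [Pi.add_apply, Pi.smul_apply, smul_eq_mul]
    rw [Finset.mul_sum, Finset.mul_sum, ← Finset.sum_add_distrib]
    exact Finset.sum_congr rfl fun j _ => by ring
  have hcloud : ConvexOn ℝ S (fun α : Fin N → ℝ =>
      ∑ j ∈ Finset.univ.filter (fun j : Fin N => (j : ℕ) < Nc), α j * c / fOSP j) := by
    refine convexOn_of_affCombo hS ?_
    intro x y a b hab
    simp only [Pi.add_apply, Pi.smul_apply, smul_eq_mul]
    rw [Finset.mul_sum, Finset.mul_sum, ← Finset.sum_add_distrib]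
    exact Finset.sum_congr rfl fun j _ => by ring
  -- edge sum
  have hedge : ConvexOn ℝ S (fun α : Fin N → ℝ =>
      ∑ j ∈ Finset.univ.filter (fun j : Fin N => Nc ≤ (j : ℕ)),
        α j * c / (fOSP j - K j - α j * lam * c)) := by
    refine convexOn_finset_sum hS _ _ fun j hj => ?_
    have hjNc : Nc ≤ (j : ℕ) := by simpa using hj
    obtain ⟨hK0, hKlt⟩ := hK j hjNc
    have hcombo : AffCombo (fun α : Fin N → ℝ => α j) := by
      intro x y a b _
      simp [Pi.add_apply, Pi.smul_apply, smul_eq_mul]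
    have h := convexOn_ratio hS hcombo (fOSP j - K j) lam c (by linarith) hlam
      (fun α hα => by
        have h5 := hα.2.2.2.2 j hjNc
        show 0 < fOSP j - K j - α j * lam * c
        linarith)
    exact h.congr fun α _ => rfl
  -- D convex
  have hD : ConvexOn ℝ S (Dfun Nc lam c z r f Sbar fOSP w K) := by
    refine ((((hG.add hH).add hw').add hcloud).add hedge).congr fun α _ => ?_
    simp [Dfun, Pi.add_apply]
  -- E convex
  have hE : ConvexOn ℝ S (Efun lam c z r f Sbar εloc εtx) := by
    have h1 := hG.smul hεloc
    have h2 := hH.smul hεtx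
    refine (h1.add h2).congr fun α _ => ?_
    simp [Efun, Pi.add_apply, smul_eq_mul]
  -- P convex
  have hP : ConvexOn ℝ S (Pfun lam c price) := by
    refine convexOn_of_affCombo hS ?_
    intro x y a b hab
    simp only [Pfun, Pi.add_apply, Pi.smul_apply, smul_eq_mul]
    rw [Finset.mul_sum, Finset.mul_sum, ← Finset.sum_add_distrib]
    exact Finset.sum_congr rfl fun j _ => by ring
  -- assemble U
  have h1 := hD.smul (c := θD / DMAX) (by positivity)
  have h2 := hE.smul (c := θE / EMAX) (by positivity)
  have h3 := hP.smul (c := θP / PMAX) (by positivity)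
  refine ((h1.add h2).add h3).congr fun α _ => ?_
  simp only [Pi.add_apply, smul_eq_mul, Ufun]
  ring

end
end

section
/- The full strategy set of an IoT mobile device, namely S₀ ∩ {α : D(α) ≤ D_MAX} ∩ {α : E(α) ≤ E_MAX} ∩ {α : P(α) ≤ P_MAX}, is a convex subset of ℝ^N. -/
open Finset

noncomputable section

/- ### Auxiliary convexity lemmas -/

lemma aux_combo_pos {t1 t2 a b : ℝ} (h1 : 0 < t1) (h2 : 0 < t2)
    (ha : 0 ≤ a) (hb : 0 ≤ b) (hab : a + b = 1) : 0 < a * t1 + b * t2 := by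
  rcases eq_or_lt_of_le ha with h | h
  · have hb1 : b = 1 := by linarith
    simp [← h, hb1, h2]
  · nlinarith [mul_pos h h1, mul_nonneg hb h2.le]

lemma aux_combo_lt {x y f a b : ℝ} (hx : x < f) (hy : y < f)
    (ha : 0 ≤ a) (hb : 0 ≤ b) (hab : a + b = 1) : a * x + b * y < f := by
  rcases eq_or_lt_of_le ha with h | h
  · have hb1 : b = 1 := by linarith
    simp [← h, hb1, hy]
  · have h1 : a * x < a * f := mul_lt_mul_of_pos_left hx h
    have h2 : b * y ≤ b * f := mul_le_mul_of_nonneg_left hy.le hb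
    have h3 : a * f + b * f = f := by rw [← add_mul, hab, one_mul]
    linarith

lemma aux_combo_le {x y f a b : ℝ} (hx : x ≤ f) (hy : y ≤ f)
    (ha : 0 ≤ a) (hb : 0 ≤ b) (hab : a + b = 1) : a * x + b * y ≤ f := by
  have h1 : a * x ≤ a * f := mul_le_mul_of_nonneg_left hx ha
  have h2 : b * y ≤ b * f := mul_le_mul_of_nonneg_left hy hb
  have h3 : a * f + b * f = f := by rw [← add_mul, hab, one_mul]
  linarith

lemma aux_inv_combo {t1 t2 a b : ℝ} (h1 : 0 < t1) (h2 : 0 < t2)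
    (ha : 0 ≤ a) (hb : 0 ≤ b) (hab : a + b = 1) :
    (a * t1 + b * t2)⁻¹ ≤ a * t1⁻¹ + b * t2⁻¹ := by
  have hpos : 0 < a * t1 + b * t2 := aux_combo_pos h1 h2 ha hb hab
  have hb' : b = 1 - a := by linarith
  subst hb'
  rw [← sub_nonneg]
  have hid : a * t1⁻¹ + (1 - a) * t2⁻¹ - (a * t1 + (1 - a) * t2)⁻¹
      = a * (1 - a) * (t1 - t2) ^ 2 / (t1 * t2 * (a * t1 + (1 - a) * t2)) := by
    field_simp
    ring
  rw [hid]
  positivity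

lemma sTot_comb {N : ℕ} (α β : Fin N → ℝ) (a b : ℝ) :
    sTot (a • α + b • β) = a * sTot α + b * sTot β := by
  simp [sTot, Finset.mul_sum, Finset.sum_add_distrib]

lemma Gfun_eq {N : ℕ} (lam c f : ℝ) (α : Fin N → ℝ) (hl : lam ≠ 0)
    (hd : f - (1 - sTot α) * lam * c ≠ 0) :
    Gfun lam c f α = f * lam⁻¹ * (f - (1 - sTot α) * lam * c)⁻¹ - lam⁻¹ := by
  have hd' : f - (1 - sTot α) * c * lam ≠ 0 := by rwa [mul_right_comm] at hd
  rw [Gfun]; field_simp; ring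

lemma Gfun_combo {N : ℕ} (lam c f : ℝ) (hlam : 0 < lam) (hf : 0 < f)
    (α β : Fin N → ℝ) (a b : ℝ) (ha : 0 ≤ a) (hb : 0 ≤ b) (hab : a + b = 1)
    (hd1 : 0 < f - (1 - sTot α) * lam * c) (hd2 : 0 < f - (1 - sTot β) * lam * c) :
    Gfun lam c f (a • α + b • β) ≤ a * Gfun lam c f α + b * Gfun lam c f β := by
  have hb' : b = 1 - a := by linarith
  subst hb'
  have hdg : f - (1 - sTot (a • α + (1 - a) • β)) * lam * c
      = a * (f - (1 - sTot α) * lam * c) + (1 - a) * (f - (1 - sTot β) * lam * c) := by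
    rw [sTot_comb]; ring
  have hdgpos : 0 < f - (1 - sTot (a • α + (1 - a) • β)) * lam * c := by
    rw [hdg]; exact aux_combo_pos hd1 hd2 ha hb hab
  rw [Gfun_eq lam c f _ hlam.ne' hdgpos.ne', Gfun_eq lam c f α hlam.ne' hd1.ne',
    Gfun_eq lam c f β hlam.ne' hd2.ne', hdg]
  have key := aux_inv_combo hd1 hd2 ha hb hab
  have hF : (0:ℝ) ≤ f * lam⁻¹ := by positivity
  have key2 := mul_le_mul_of_nonneg_left key hF
  rw [← sub_nonneg]
  have hid : a * (f * lam⁻¹ * (f - (1 - sTot α) * lam * c)⁻¹ - lam⁻¹) +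
      (1 - a) * (f * lam⁻¹ * (f - (1 - sTot β) * lam * c)⁻¹ - lam⁻¹) -
      (f * lam⁻¹ * (a * (f - (1 - sTot α) * lam * c) + (1 - a) * (f - (1 - sTot β) * lam * c))⁻¹ - lam⁻¹)
      = f * lam⁻¹ * (a * (f - (1 - sTot α) * lam * c)⁻¹ + (1 - a) * (f - (1 - sTot β) * lam * c)⁻¹) -
        f * lam⁻¹ * (a * (f - (1 - sTot α) * lam * c) + (1 - a) * (f - (1 - sTot β) * lam * c))⁻¹ := by
    ring
  rw [hid]
  linarith

lemma Hfun_eq {N : ℕ} (lam z r Sbar : ℝ) (α : Fin N → ℝ)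
    (hl : lam ≠ 0) (hz : z ≠ 0) (hr : r ≠ 0)
    (ht : r - lam * z * sTot α ≠ 0) :
    Hfun lam z r Sbar α = (Sbar * r ^ 2 / (2 * lam * z ^ 2)) *
      ((1 - lam * z * sTot α / r)⁻¹ - 2 + (1 - lam * z * sTot α / r)) +
      sTot α * z / r := by
  rw [Hfun]
  have key : 1 - lam * z * sTot α / r = (r - lam * z * sTot α) / r := by
    field_simp
  rw [key, inv_div]
  have ht' : r - sTot α * lam * z ≠ 0 := by rwa [mul_comm, ← mul_assoc] at ht
  field_simp
  ring

lemma Hfun_combo {N : ℕ} (lam z r Sbar : ℝ) (hlam : 0 < lam) (hz : 0 < z)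
    (hr : 0 < r) (hSbar : 0 < Sbar)
    (α β : Fin N → ℝ) (a b : ℝ) (ha : 0 ≤ a) (hb : 0 ≤ b) (hab : a + b = 1)
    (ht1 : lam * z * sTot α < r) (ht2 : lam * z * sTot β < r) :
    Hfun lam z r Sbar (a • α + b • β) ≤ a * Hfun lam z r Sbar α + b * Hfun lam z r Sbar β := by
  have hb' : b = 1 - a := by linarith
  subst hb'
  have hp1 : (0:ℝ) < 1 - lam * z * sTot α / r := by
    rw [sub_pos, div_lt_one hr]; exact ht1
  have hp2 : (0:ℝ) < 1 - lam * z * sTot β / r := by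
    rw [sub_pos, div_lt_one hr]; exact ht2
  have hn1 : r - lam * z * sTot α ≠ 0 := by intro h; rw [sub_eq_zero] at h; simp [← h] at ht1
  have hn2 : r - lam * z * sTot β ≠ 0 := by intro h; rw [sub_eq_zero] at h; simp [← h] at ht2
  have htg : 1 - lam * z * sTot (a • α + (1 - a) • β) / r
      = a * (1 - lam * z * sTot α / r) + (1 - a) * (1 - lam * z * sTot β / r) := by
    rw [sTot_comb]
    field_simp
    ring
  have htgpos : (0:ℝ) < 1 - lam * z * sTot (a • α + (1 - a) • β) / r := by
    rw [htg]; exact aux_combo_pos hp1 hp2 ha hb hab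
  have hng : r - lam * z * sTot (a • α + (1 - a) • β) ≠ 0 := by
    intro h
    rw [sub_eq_zero] at h
    rw [← h, div_self hr.ne'] at htgpos
    simp at htgpos
  rw [Hfun_eq lam z r Sbar _ hlam.ne' hz.ne' hr.ne' hng,
    Hfun_eq lam z r Sbar α hlam.ne' hz.ne' hr.ne' hn1,
    Hfun_eq lam z r Sbar β hlam.ne' hz.ne' hr.ne' hn2, htg, sTot_comb]
  have key := aux_inv_combo hp1 hp2 ha hb hab
  have hC : (0:ℝ) ≤ Sbar * r ^ 2 / (2 * lam * z ^ 2) := by positivity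
  have key2 := mul_le_mul_of_nonneg_left key hC
  rw [← sub_nonneg]
  have hid : a * (Sbar * r ^ 2 / (2 * lam * z ^ 2) *
        ((1 - lam * z * sTot α / r)⁻¹ - 2 + (1 - lam * z * sTot α / r)) + sTot α * z / r) +
      (1 - a) * (Sbar * r ^ 2 / (2 * lam * z ^ 2) *
        ((1 - lam * z * sTot β / r)⁻¹ - 2 + (1 - lam * z * sTot β / r)) + sTot β * z / r) -
      (Sbar * r ^ 2 / (2 * lam * z ^ 2) *
        ((a * (1 - lam * z * sTot α / r) + (1 - a) * (1 - lam * z * sTot β / r))⁻¹ - 2 +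
          (a * (1 - lam * z * sTot α / r) + (1 - a) * (1 - lam * z * sTot β / r))) +
        (a * sTot α + (1 - a) * sTot β) * z / r)
      = Sbar * r ^ 2 / (2 * lam * z ^ 2) *
          (a * (1 - lam * z * sTot α / r)⁻¹ + (1 - a) * (1 - lam * z * sTot β / r)⁻¹) -
        Sbar * r ^ 2 / (2 * lam * z ^ 2) *
          (a * (1 - lam * z * sTot α / r) + (1 - a) * (1 - lam * z * sTot β / r))⁻¹ := by
    ring
  rw [hid]
  linarith

lemma edge_combo (lam c A x y a b : ℝ) (hlam : 0 < lam) (hA : 0 < A)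
    (ha : 0 ≤ a) (hb : 0 ≤ b) (hab : a + b = 1)
    (hu1 : 0 < A - x * lam * c) (hu2 : 0 < A - y * lam * c) :
    (a * x + b * y) * c / (A - (a * x + b * y) * lam * c) ≤
      a * (x * c / (A - x * lam * c)) + b * (y * c / (A - y * lam * c)) := by
  have hb' : b = 1 - a := by linarith
  subst hb'
  have hug : A - (a * x + (1 - a) * y) * lam * c
      = a * (A - x * lam * c) + (1 - a) * (A - y * lam * c) := by ring
  have hugpos : 0 < A - (a * x + (1 - a) * y) * lam * c := by
    rw [hug]; exact aux_combo_pos hu1 hu2 ha hb hab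
  have e1 : x * c / (A - x * lam * c) = A * lam⁻¹ * (A - x * lam * c)⁻¹ - lam⁻¹ := by
    have h' : A - x * c * lam ≠ 0 := by rw [mul_right_comm]; exact hu1.ne'
    field_simp; ring
  have e2 : y * c / (A - y * lam * c) = A * lam⁻¹ * (A - y * lam * c)⁻¹ - lam⁻¹ := by
    have h' : A - y * c * lam ≠ 0 := by rw [mul_right_comm]; exact hu2.ne'
    field_simp; ring
  have e3 : (a * x + (1 - a) * y) * c / (A - (a * x + (1 - a) * y) * lam * c)
      = A * lam⁻¹ * (A - (a * x + (1 - a) * y) * lam * c)⁻¹ - lam⁻¹ := by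
    have h' : A - (a * x + (1 - a) * y) * c * lam ≠ 0 := by rw [mul_right_comm]; exact hugpos.ne'
    field_simp; ring
  rw [e1, e2, e3, hug]
  have key := aux_inv_combo hu1 hu2 ha hb hab
  have hF : (0:ℝ) ≤ A * lam⁻¹ := by positivity
  have key2 := mul_le_mul_of_nonneg_left key hF
  rw [← sub_nonneg]
  have hid : a * (A * lam⁻¹ * (A - x * lam * c)⁻¹ - lam⁻¹) +
      (1 - a) * (A * lam⁻¹ * (A - y * lam * c)⁻¹ - lam⁻¹) -
      (A * lam⁻¹ * (a * (A - x * lam * c) + (1 - a) * (A - y * lam * c))⁻¹ - lam⁻¹)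
      = A * lam⁻¹ * (a * (A - x * lam * c)⁻¹ + (1 - a) * (A - y * lam * c)⁻¹) -
        A * lam⁻¹ * (a * (A - x * lam * c) + (1 - a) * (A - y * lam * c))⁻¹ := by
    ring
  rw [hid]
  linarith

/-- The full strategy set of an IoT MD is a convex subset of `ℝ^N`. -/
theorem strategySet_convex (N Nc : ℕ) (hN : 1 ≤ N) (hNc : Nc ≤ N)
    (lam c z r f Sbar : ℝ) (hlam : 0 < lam) (hc : 0 < c) (hz : 0 < z) (hr : 0 < r)
    (hf : 0 < f) (hSbar : 0 < Sbar)
    (εloc εtx : ℝ) (hεloc : 0 ≤ εloc) (hεtx : 0 ≤ εtx)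
    (fOSP w K price : Fin N → ℝ)
    (hfOSP : ∀ j, 0 < fOSP j) (hw : ∀ j, 0 ≤ w j) (hprice : ∀ j, 0 ≤ price j)
    (hK : ∀ j : Fin N, Nc ≤ (j : ℕ) → 0 ≤ K j ∧ K j < fOSP j)
    (DMAX EMAX PMAX : ℝ) (hDMAX : 0 < DMAX) (hEMAX : 0 < EMAX) (hPMAX : 0 < PMAX) :
    Convex ℝ (S0 Nc lam c z r f fOSP K ∩
      {α : Fin N → ℝ | Dfun Nc lam c z r f Sbar fOSP w K α ≤ DMAX} ∩
      {α : Fin N → ℝ | Efun lam c z r f Sbar εloc εtx α ≤ EMAX} ∩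
      {α : Fin N → ℝ | Pfun lam c price α ≤ PMAX}) := by
  intro α hα β hβ a b ha hb hab
  obtain ⟨⟨⟨hαS, hαD⟩, hαE⟩, hαP⟩ := hα
  obtain ⟨⟨⟨hβS, hβD⟩, hβE⟩, hβP⟩ := hβ
  obtain ⟨hα0, hs1, hd1, ht1, hK1⟩ := hαS
  obtain ⟨hβ0, hs2, hd2, ht2, hK2⟩ := hβS
  have hb' : b = 1 - a := by linarith
  subst hb'
  have hd1' : 0 < f - (1 - sTot α) * lam * c := by linarith
  have hd2' : 0 < f - (1 - sTot β) * lam * c := by linarith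
  -- key convexity inequalities
  have hG := Gfun_combo lam c f hlam hf α β a (1 - a) ha hb hab hd1' hd2'
  have hH := Hfun_combo lam z r Sbar hlam hz hr hSbar α β a (1 - a) ha hb hab ht1 ht2
  have hW : (∑ j, (a • α + (1 - a) • β) j * w j)
      = a * (∑ j, α j * w j) + (1 - a) * (∑ j, β j * w j) := by
    rw [Finset.mul_sum, Finset.mul_sum, ← Finset.sum_add_distrib]
    exact Finset.sum_congr rfl fun j _ => by
      simp only [Pi.add_apply, Pi.smul_apply, smul_eq_mul]; ring
  have hCl : (∑ j ∈ Finset.univ.filter (fun j : Fin N => (j : ℕ) < Nc),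
        (a • α + (1 - a) • β) j * c / fOSP j)
      = a * (∑ j ∈ Finset.univ.filter (fun j : Fin N => (j : ℕ) < Nc), α j * c / fOSP j) +
        (1 - a) * (∑ j ∈ Finset.univ.filter (fun j : Fin N => (j : ℕ) < Nc), β j * c / fOSP j) := by
    rw [Finset.mul_sum, Finset.mul_sum, ← Finset.sum_add_distrib]
    exact Finset.sum_congr rfl fun j _ => by
      simp only [Pi.add_apply, Pi.smul_apply, smul_eq_mul]; ring
  have hEdge : (∑ j ∈ Finset.univ.filter (fun j : Fin N => Nc ≤ (j : ℕ)),
        (a • α + (1 - a) • β) j * c /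
          (fOSP j - K j - (a • α + (1 - a) • β) j * lam * c))
      ≤ a * (∑ j ∈ Finset.univ.filter (fun j : Fin N => Nc ≤ (j : ℕ)),
            α j * c / (fOSP j - K j - α j * lam * c)) +
        (1 - a) * (∑ j ∈ Finset.univ.filter (fun j : Fin N => Nc ≤ (j : ℕ)),
            β j * c / (fOSP j - K j - β j * lam * c)) := by
    rw [Finset.mul_sum, Finset.mul_sum, ← Finset.sum_add_distrib]
    refine Finset.sum_le_sum fun j hj => ?_
    have hjNc : Nc ≤ (j : ℕ) := by
      simpa using (Finset.mem_filter.mp hj).2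
    have hA : 0 < fOSP j - K j := by
      have h := hK j hjNc
      linarith [h.1, h.2]
    have hu1 : 0 < fOSP j - K j - α j * lam * c := by
      have := hK1 j hjNc; linarith
    have hu2 : 0 < fOSP j - K j - β j * lam * c := by
      have := hK2 j hjNc; linarith
    have key := edge_combo lam c (fOSP j - K j) (α j) (β j) a (1 - a)
      hlam hA ha hb hab hu1 hu2
    simp only [Pi.add_apply, Pi.smul_apply, smul_eq_mul]
    exact key
  have hP : Pfun lam c price (a • α + (1 - a) • β)
      = a * Pfun lam c price α + (1 - a) * Pfun lam c price β := by
    rw [Pfun, Pfun, Pfun, Finset.mul_sum, Finset.mul_sum, ← Finset.sum_add_distrib]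
    exact Finset.sum_congr rfl fun j _ => by
      simp only [Pi.add_apply, Pi.smul_apply, smul_eq_mul]; ring
  -- D bound
  have hD : Dfun Nc lam c z r f Sbar fOSP w K (a • α + (1 - a) • β)
      ≤ a * Dfun Nc lam c z r f Sbar fOSP w K α +
        (1 - a) * Dfun Nc lam c z r f Sbar fOSP w K β := by
    rw [Dfun, Dfun, Dfun, hW, hCl]
    linarith
  -- E bound
  have hE : Efun lam c z r f Sbar εloc εtx (a • α + (1 - a) • β)
      ≤ a * Efun lam c z r f Sbar εloc εtx α +
        (1 - a) * Efun lam c z r f Sbar εloc εtx β := by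
    rw [Efun, Efun, Efun]
    have h1 := mul_le_mul_of_nonneg_left hG hεloc
    have h2 := mul_le_mul_of_nonneg_left hH hεtx
    nlinarith [h1, h2]
  refine ⟨⟨⟨⟨?_, ?_, ?_, ?_, ?_⟩, ?_⟩, ?_⟩, ?_⟩
  · intro j
    simp only [Pi.add_apply, Pi.smul_apply, smul_eq_mul]
    exact add_nonneg (mul_nonneg ha (hα0 j)) (mul_nonneg hb (hβ0 j))
  · rw [sTot_comb]
    exact aux_combo_le hs1 hs2 ha hb hab
  · rw [sTot_comb]
    have e : (1 - (a * sTot α + (1 - a) * sTot β)) * lam * c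
        = a * ((1 - sTot α) * lam * c) + (1 - a) * ((1 - sTot β) * lam * c) := by ring
    rw [e]
    exact aux_combo_lt hd1 hd2 ha hb hab
  · rw [sTot_comb]
    have e : lam * z * (a * sTot α + (1 - a) * sTot β)
        = a * (lam * z * sTot α) + (1 - a) * (lam * z * sTot β) := by ring
    rw [e]
    exact aux_combo_lt ht1 ht2 ha hb hab
  · intro j hj
    simp only [Pi.add_apply, Pi.smul_apply, smul_eq_mul]
    have e : K j + (a * α j + (1 - a) * β j) * lam * c
        = a * (K j + α j * lam * c) + (1 - a) * (K j + β j * lam * c) := by ring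
    rw [e]
    exact aux_combo_lt (hK1 j hj) (hK2 j hj) ha hb hab
  · exact le_trans hD (aux_combo_le hαD hβD ha hb hab)
  · exact le_trans hE (aux_combo_le hαE hβE ha hb hab)
  · show Pfun lam c price (a • α + (1 - a) • β) ≤ PMAX
    rw [hP]
    exact aux_combo_le hαP hβP ha hb hab

end
end

section
/- The expected wireless transmission delay contribution is strictly convex in the total offloading fraction: the function H(s) = s·(λ·S̄·s/(2·(1 - λ·z·s/r)) + z/r) is strictly convex on the set T = {s ∈ ℝ : 0 ≤ s and λ·z·s < r}. -/
/-- The wireless transmission delay contribution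
`H(s) = s·(λ·S̄·s/(2·(1 - λ·z·s/r)) + z/r)` is strictly convex on
`T = {s : 0 ≤ s, λ·z·s < r}`. -/
theorem wirelessDelay_strictConvexOn (lam z r Sbar : ℝ)
    (hlam : 0 < lam) (hz : 0 < z) (hr : 0 < r) (hSbar : 0 < Sbar) :
    StrictConvexOn ℝ {s : ℝ | 0 ≤ s ∧ lam * z * s < r}
      (fun s : ℝ => s * (lam * Sbar * s / (2 * (1 - lam * z * s / r)) + z / r)) := by
  set T : Set ℝ := {s : ℝ | 0 ≤ s ∧ lam * z * s < r} with hT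
  have ha0 : 0 < lam * z / r := by positivity
  set a : ℝ := lam * z / r with haa
  have hC0 : 0 < lam * Sbar / (2 * a ^ 2) := by positivity
  set C : ℝ := lam * Sbar / (2 * a ^ 2) with hCC
  have hTconv : Convex ℝ T := by
    intro x hx y hy t u ht hu htu
    obtain ⟨hx1, hx2⟩ := hx
    obtain ⟨hy1, hy2⟩ := hy
    constructor
    · simp only [smul_eq_mul]
      positivity
    · simp only [smul_eq_mul]
      rcases eq_or_lt_of_le ht with h | h
      · have hu1 : u = 1 := by linarith
        subst hu1
        simp only [← h, zero_mul, zero_add, one_mul]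
        linarith
      · nlinarith [mul_lt_mul_of_pos_left hx2 h, mul_le_mul_of_nonneg_left hy2.le hu]
  have hmem : ∀ s ∈ T, 0 < 1 - a * s := by
    intro s hs
    obtain ⟨hs1, hs2⟩ := hs
    rw [haa]
    have : lam * z / r * s = lam * z * s / r := by ring
    rw [this]
    rw [sub_pos, div_lt_one hr]
    exact hs2
  -- the strictly convex part
  have hf1 : StrictConvexOn ℝ T (fun s => ((1 - a * s) / C)⁻¹) := by
    have hzpow := strictConvexOn_zpow (m := -1) (by decide) (by decide)
    refine ⟨hTconv, fun x hx y hy hxy t u ht hu htu => ?_⟩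
    have hLx : (1 - a * x) / C ∈ Set.Ioi (0:ℝ) := by
      exact div_pos (hmem x hx) hC0
    have hLy : (1 - a * y) / C ∈ Set.Ioi (0:ℝ) := by
      exact div_pos (hmem y hy) hC0
    have hLne : (1 - a * x) / C ≠ (1 - a * y) / C := by
      intro h
      apply hxy
      have h2 : 1 - a * x = 1 - a * y := by rwa [div_left_inj' hC0.ne'] at h
      have h3 : a * x = a * y := by linarith
      exact mul_left_cancel₀ ha0.ne' h3
    have key := hzpow.2 hLx hLy hLne ht hu htu
    simp only [smul_eq_mul, zpow_neg, zpow_one] at key ⊢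
    have hL : (1 - a * (t * x + u * y)) / C = t * ((1 - a * x) / C) + u * ((1 - a * y) / C) := by
      field_simp
      nlinarith [htu]
    rw [hL]
    exact key
  -- the affine part
  have hf2 : ConvexOn ℝ T (fun s => C * (1 - a * s) + z / r * s - 2 * C) := by
    refine ⟨hTconv, fun x hx y hy t u ht hu htu => le_of_eq ?_⟩
    simp only [smul_eq_mul]
    nlinarith [htu]
  have hsum := hf1.add_convexOn hf2
  refine hsum.congr fun s hs => ?_
  have hu : (0:ℝ) < 1 - a * s := hmem s hs
  have hu' : (1 - a * s) ≠ 0 := hu.ne'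
  have hu2 : 1 - lam * z * s / r = 1 - a * s := by
    rw [haa]; ring
  simp only [Pi.add_apply]
  rw [hu2, hCC, haa]
  have hane : lam * z / r ≠ 0 := ha0.ne'
  have hrs : r - lam * z * s ≠ 0 := (sub_pos.2 hs.2).ne'
  field_simp
  ring
end

section
/- Equivalence of Nash equilibria and variational-inequality solutions for convex games (Theorem 2): let H be a real inner product space, M a positive integer, and for each player i ∈ Fin M let S i ⊆ H be a convex set and U i : (Fin M → H) → ℝ a payoff. Suppose for every feasible profile x (x i ∈ S i for all i) and every player i, the section y ↦ U i (Function.update x i y) is convex on S i and has gradient F i x at x i. Then a feasible profile x* is a Nash equilibrium (for every i and every y ∈ S i, U i x* ≤ U i (Function.update x* i y)) if and only if x* solves the variational inequality: for every feasible profile z, Σ_{i} ⟪F i x*, z i - x* i⟫ ≥ 0. -/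
open scoped RealInnerProductSpace
open Filter Topology

private lemma dir_deriv_aux {H : Type*} [NormedAddCommGroup H] [InnerProductSpace ℝ H]
    [CompleteSpace H] {f : H → ℝ} {g x : H} (hg : HasGradientAt f g x) (v : H) :
    HasDerivAt (fun t : ℝ => f (x + t • v)) ⟪g, v⟫ 0 := by
  have hc : HasDerivAt (fun t : ℝ => x + t • v) v 0 := by
    simpa using ((hasDerivAt_id (0:ℝ)).smul_const v).const_add x
  have hg' : HasFDerivAt f ((InnerProductSpace.toDual ℝ H) g) (x + (0:ℝ) • v) := by
    simpa using hg.hasFDerivAt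
  have := hg'.comp_hasDerivAt 0 hc
  simp [Function.comp_def] at this
  exact this

private lemma slope_tendsto_aux {H : Type*} [NormedAddCommGroup H] [InnerProductSpace ℝ H]
    [CompleteSpace H] {f : H → ℝ} {g x : H} (hg : HasGradientAt f g x) (v : H) :
    Tendsto (slope (fun t : ℝ => f (x + t • v)) 0) (𝓝[>] 0) (𝓝 ⟪g, v⟫) :=
  (hasDerivAt_iff_tendsto_slope.mp (dir_deriv_aux hg v)).mono_left
    (nhdsWithin_mono _ (fun t ht => ne_of_gt ht))

/-- Gradient inequality for convex functions. -/
private lemma convex_grad_ineq {H : Type*} [NormedAddCommGroup H] [InnerProductSpace ℝ H]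
    [CompleteSpace H] {f : H → ℝ} {s : Set H} (hf : ConvexOn ℝ s f) {x g : H}
    (hg : HasGradientAt f g x) (hx : x ∈ s) {y : H} (hy : y ∈ s) :
    f x + ⟪g, y - x⟫ ≤ f y := by
  have hle : ⟪g, y - x⟫ ≤ f y - f x := by
    refine le_of_tendsto (slope_tendsto_aux hg (y - x)) ?_
    filter_upwards [Ioc_mem_nhdsGT_of_mem (Set.left_mem_Ico.mpr one_pos)] with t ht
    have ht0 : (0:ℝ) < t := ht.1
    have hcv : f (x + t • (y - x)) ≤ (1 - t) * f x + t * f y := by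
      have h := hf.2 hx hy (by linarith [ht.2] : (0:ℝ) ≤ 1 - t) ht0.le (by ring)
      have heq : x + t • (y - x) = (1 - t) • x + t • y := by module
      rw [heq]
      simpa [smul_eq_mul] using h
    have h0 : x + (0:ℝ) • (y - x) = x := by simp
    rw [slope_def_field, h0, sub_zero, div_le_iff₀ ht0]
    nlinarith
  linarith

/-- First-order condition: a minimizer of a differentiable function on a convex set
satisfies the variational inequality. -/
private lemma min_grad_nonneg {H : Type*} [NormedAddCommGroup H] [InnerProductSpace ℝ H]
    [CompleteSpace H] {f : H → ℝ} {s : Set H} (hs : Convex ℝ s) {x g : H}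
    (hg : HasGradientAt f g x) (hx : x ∈ s) (hmin : ∀ w ∈ s, f x ≤ f w)
    {y : H} (hy : y ∈ s) : 0 ≤ ⟪g, y - x⟫ := by
  refine ge_of_tendsto (slope_tendsto_aux hg (y - x)) ?_
  filter_upwards [Ioc_mem_nhdsGT_of_mem (Set.left_mem_Ico.mpr one_pos)] with t ht
  have ht0 : (0:ℝ) < t := ht.1
  have hmem : x + t • (y - x) ∈ s := by
    have := hs hx hy (by linarith [ht.2] : (0:ℝ) ≤ 1 - t) ht0.le (by ring)
    have heq : x + t • (y - x) = (1 - t) • x + t • y := by module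
    rwa [heq]
  have := hmin _ hmem
  have h0 : x + (0:ℝ) • (y - x) = x := by simp
  rw [slope_def_field, h0, sub_zero]
  exact div_nonneg (by linarith) ht0.le

/-- Equivalence of Nash equilibria and variational-inequality solutions for convex
games: a feasible profile `x*` is a Nash equilibrium iff it solves the variational
inequality `Σ_i ⟪F i x*, z i - x* i⟫ ≥ 0` for every feasible profile `z`. -/
theorem nash_iff_variational_inequality
    {H : Type*} [NormedAddCommGroup H] [InnerProductSpace ℝ H] [CompleteSpace H]
    (M : ℕ) (hM : 0 < M) (S : Fin M → Set H) (hS : ∀ i, Convex ℝ (S i))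
    (U : Fin M → (Fin M → H) → ℝ) (F : Fin M → (Fin M → H) → H)
    (hconv : ∀ x : Fin M → H, (∀ i, x i ∈ S i) → ∀ i,
      ConvexOn ℝ (S i) (fun y => U i (Function.update x i y)))
    (hgrad : ∀ x : Fin M → H, (∀ i, x i ∈ S i) → ∀ i,
      HasGradientAt (fun y => U i (Function.update x i y)) (F i x) (x i))
    (xs : Fin M → H) (hxs : ∀ i, xs i ∈ S i) :
    (∀ i, ∀ y ∈ S i, U i xs ≤ U i (Function.update xs i y)) ↔
      (∀ z : Fin M → H, (∀ i, z i ∈ S i) → 0 ≤ ∑ i, ⟪F i xs, z i - xs i⟫) := by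
  constructor
  · intro hnash z hz
    refine Finset.sum_nonneg fun i _ => ?_
    refine min_grad_nonneg (hS i) (hgrad xs hxs i) (hxs i) ?_ (hz i)
    intro w hw
    simpa [Function.update_eq_self] using hnash i w hw
  · intro hvi i y hy
    set z : Fin M → H := Function.update xs i y with hz
    have hzf : ∀ j, z j ∈ S j := by
      intro j
      rcases eq_or_ne j i with rfl | hj
      · simpa [hz]
      · simpa [hz, Function.update_of_ne hj] using hxs j
    have hsum := hvi z hzf
    have hsum' : ∑ j, ⟪F j xs, z j - xs j⟫ = ⟪F i xs, y - xs i⟫ := by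
      rw [Finset.sum_eq_single i]
      · simp [hz]
      · intro j _ hj
        simp [hz, Function.update_of_ne hj]
      · simp
    rw [hsum'] at hsum
    have key := convex_grad_ineq (hconv xs hxs i) (hgrad xs hxs i) (hxs i) hy
    have hfx : U i (Function.update xs i (xs i)) = U i xs := by
      simp [Function.update_eq_self]
    linarith [key, hfx.ge]
end

section
/- Strict convexity of the disutility along each coordinate: assume θ_D + θ_E > 0. Then for every index j and every α ∈ S₀, the one-variable function t ↦ U(α with its j-th coordinate replaced by t) is strictly convex on the interval {t ∈ ℝ : the updated vector lies in S₀}. -/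
open Finset

noncomputable section

lemma aux_lin_combo_lt {X Y M p q : ℝ} (hx : X < M) (hy : Y < M) (hp : 0 ≤ p) (hq : 0 ≤ q)
    (hpq : p + q = 1) : p * X + q * Y < M := by
  rcases eq_or_lt_of_le hp with h | h
  · have hq1 : q = 1 := by linarith
    rw [← h, hq1]; simpa using hy
  · have hM : p * M + q * M = M := by linear_combination M * hpq
    linarith [mul_lt_mul_of_pos_left hx h, mul_le_mul_of_nonneg_left hy.le hq]

lemma aux_inv_strict {a b : ℝ} (ha : a ≠ 0) {s : Set ℝ} (hs : Convex ℝ s)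
    (hpos : ∀ t ∈ s, 0 < a * t + b) :
    StrictConvexOn ℝ s (fun t => (a * t + b)⁻¹) := by
  refine ⟨hs, fun x hx y hy hxy p q hp hq hpq => ?_⟩
  have hX : 0 < a * x + b := hpos x hx
  have hY : 0 < a * y + b := hpos y hy
  have hXY : a * x + b ≠ a * y + b := by
    intro h; apply hxy
    have : a * x = a * y := by linarith
    exact mul_left_cancel₀ ha this
  simp only [smul_eq_mul]
  have hZ : a * (p * x + q * y) + b = p * (a * x + b) + q * (a * y + b) := by
    linear_combination (-b) * hpq
  rw [hZ]
  set X := a * x + b with hXdef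
  set Y := a * y + b with hYdef
  have hPQ : 0 < p * X + q * Y := by nlinarith [mul_pos hp hX, mul_pos hq hY]
  have e1 : p * X⁻¹ + q * Y⁻¹ = (p * Y + q * X) / (X * Y) := by
    field_simp
  rw [e1, inv_eq_one_div, div_lt_div_iff₀ hPQ (mul_pos hX hY)]
  have hsq : 0 < (X - Y) ^ 2 := by
    have : X - Y ≠ 0 := sub_ne_zero.mpr hXY
    positivity
  have e2 : (p * Y + q * X) * (p * X + q * Y) = X * Y + p * q * (X - Y) ^ 2 := by
    linear_combination (X * Y * (p + q + 1)) * hpq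
  nlinarith [mul_pos (mul_pos hp hq) hsq]

lemma aux_affine_convex {s : Set ℝ} (hs : Convex ℝ s) (m q : ℝ) :
    ConvexOn ℝ s (fun t => m * t + q) :=
  ⟨hs, fun x _ y _ p p' hp hp' hpq => by
    simp only [smul_eq_mul]
    apply le_of_eq
    linear_combination (-q) * hpq⟩

lemma aux_smul_strict {k : ℝ} {s : Set ℝ} {f : ℝ → ℝ} (hk : 0 < k)
    (hf : StrictConvexOn ℝ s f) : StrictConvexOn ℝ s (fun t => k * f t) :=
  ⟨hf.1, fun x hx y hy hxy p q hp hq hpq => by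
    have h := hf.2 hx hy hxy hp hq hpq
    simp only [smul_eq_mul] at h ⊢
    nlinarith [mul_lt_mul_of_pos_left h hk]⟩

lemma aux_smul_convex {k : ℝ} {s : Set ℝ} {f : ℝ → ℝ} (hk : 0 ≤ k)
    (hf : ConvexOn ℝ s f) : ConvexOn ℝ s (fun t => k * f t) :=
  ⟨hf.1, fun x hx y hy p q hp hq hpq => by
    have h := hf.2 hx hy hp hq hpq
    simp only [smul_eq_mul] at h ⊢
    nlinarith [mul_le_mul_of_nonneg_left h hk]⟩

lemma aux_strict_congr {s : Set ℝ} {f g : ℝ → ℝ} (hf : StrictConvexOn ℝ s f)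
    (h : Set.EqOn f g s) : StrictConvexOn ℝ s g :=
  ⟨hf.1, fun x hx y hy hxy p q hp hq hpq => by
    rw [← h hx, ← h hy, ← h (hf.1 hx hy hp.le hq.le hpq)]
    exact hf.2 hx hy hxy hp hq hpq⟩

lemma aux_convex_congr {s : Set ℝ} {f g : ℝ → ℝ} (hf : ConvexOn ℝ s f)
    (h : Set.EqOn f g s) : ConvexOn ℝ s g :=
  ⟨hf.1, fun x hx y hy p q hp hq hpq => by
    rw [← h hx, ← h hy, ← h (hf.1 hx hy hp hq hpq)]
    exact hf.2 hx hy hp hq hpq⟩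

lemma aux_add_strict {s : Set ℝ} {f g : ℝ → ℝ} (hf : StrictConvexOn ℝ s f)
    (hg : ConvexOn ℝ s g) : StrictConvexOn ℝ s (fun t => f t + g t) :=
  hf.add_convexOn hg

lemma aux_add_convex {s : Set ℝ} {f g : ℝ → ℝ} (hf : ConvexOn ℝ s f)
    (hg : ConvexOn ℝ s g) : ConvexOn ℝ s (fun t => f t + g t) :=
  hf.add hg

set_option maxHeartbeats 1600000 in
/-- Strict convexity of the disutility along each coordinate: if `θ_D + θ_E > 0`,
then for every index `j` and every `α ∈ S₀`, `t ↦ U(α with j-th coordinate replaced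
by t)` is strictly convex on `{t | Function.update α j t ∈ S₀}`. -/
theorem disutility_strictConvexOn_coord (N Nc : ℕ) (hN : 1 ≤ N) (hNc : Nc ≤ N)
    (lam c z r f Sbar : ℝ) (hlam : 0 < lam) (hc : 0 < c) (hz : 0 < z) (hr : 0 < r)
    (hf : 0 < f) (hSbar : 0 < Sbar)
    (εloc εtx : ℝ) (hεloc : 0 < εloc) (hεtx : 0 < εtx)
    (fOSP w K price : Fin N → ℝ)
    (hfOSP : ∀ j, 0 < fOSP j) (hw : ∀ j, 0 ≤ w j) (hprice : ∀ j, 0 ≤ price j)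
    (hK : ∀ j : Fin N, Nc ≤ (j : ℕ) → 0 ≤ K j ∧ K j < fOSP j)
    (θD θE θP : ℝ) (hθD : 0 ≤ θD) (hθE : 0 ≤ θE) (hθP : 0 ≤ θP)
    (hθDE : 0 < θD + θE)
    (DMAX EMAX PMAX : ℝ) (hDMAX : 0 < DMAX) (hEMAX : 0 < EMAX) (hPMAX : 0 < PMAX) :
    ∀ j : Fin N, ∀ α ∈ S0 Nc lam c z r f fOSP K,
      StrictConvexOn ℝ {t : ℝ | Function.update α j t ∈ S0 Nc lam c z r f fOSP K}
        (fun t : ℝ =>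
          Ufun Nc lam c z r f Sbar εloc εtx fOSP w K price θD θE θP DMAX EMAX PMAX
            (Function.update α j t)) := by
  intro j α hα
  classical
  set S : Set ℝ := {t : ℝ | Function.update α j t ∈ S0 Nc lam c z r f fOSP K} with hSdef
  set Cs : ℝ := ∑ i ∈ Finset.univ \ {j}, α i with hCsdef
  have hsT : ∀ t : ℝ, sTot (Function.update α j t) = t + Cs := by
    intro t
    show (∑ i, Function.update α j t i) = t + Cs
    rw [Finset.sum_update_of_mem (Finset.mem_univ j), ← hCsdef]
  have hmem : ∀ {t : ℝ}, t ∈ S →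
      ((∀ i, 0 ≤ Function.update α j t i) ∧ sTot (Function.update α j t) ≤ 1 ∧
        (1 - sTot (Function.update α j t)) * lam * c < f ∧
        lam * z * sTot (Function.update α j t) < r ∧
        ∀ i : Fin N, Nc ≤ (i : ℕ) → K i + Function.update α j t i * lam * c < fOSP i) := by
    intro t ht
    rw [hSdef] at ht
    exact ht
  -- positivity of the three relevant affine denominators on S
  have hd1 : ∀ t ∈ S, 0 < lam * c * t + (f - (1 - Cs) * lam * c) := by
    intro t ht
    have h := (hmem ht).2.2.1
    rw [hsT] at h
    nlinarith [h]
  have hd2 : ∀ t ∈ S, 0 < -(lam * z) * t + (r - lam * z * Cs) := by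
    intro t ht
    have h := (hmem ht).2.2.2.1
    rw [hsT] at h
    nlinarith [h]
  have hd3 : Nc ≤ (j : ℕ) → ∀ t ∈ S, 0 < -(lam * c) * t + (fOSP j - K j) := by
    intro hj t ht
    have h := (hmem ht).2.2.2.2 j hj
    rw [Function.update_self] at h
    nlinarith [h]
  -- convexity of S
  have hconvS : Convex ℝ S := by
    intro x hx y hy p q hp hq hpq
    obtain ⟨h1x, h2x, h3x, h4x, h5x⟩ := hmem hx
    obtain ⟨h1y, h2y, h3y, h4y, h5y⟩ := hmem hy
    rw [hsT] at h2x h3x h4x h2y h3y h4y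
    rw [hSdef]
    simp only [Set.mem_setOf_eq, S0, smul_eq_mul]
    refine ⟨fun i => ?_, ?_, ?_, ?_, fun i hi => ?_⟩
    · by_cases hij : i = j
      · subst hij
        have a1 := h1x i; have a2 := h1y i
        rw [Function.update_self] at a1 a2 ⊢
        nlinarith [mul_nonneg hp a1, mul_nonneg hq a2]
      · rw [Function.update_of_ne hij]
        have a1 := h1x i
        rwa [Function.update_of_ne hij] at a1
    · rw [hsT]
      have hM : p * (1 : ℝ) + q * 1 = 1 := by linear_combination hpq
      have hcs : p * Cs + q * Cs = Cs := by linear_combination Cs * hpq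
      nlinarith [mul_le_mul_of_nonneg_left h2x hp, mul_le_mul_of_nonneg_left h2y hq]
    · rw [hsT]
      have e : (1 - (p * x + q * y + Cs)) * lam * c
          = p * ((1 - (x + Cs)) * lam * c) + q * ((1 - (y + Cs)) * lam * c) := by
        linear_combination (-((1 - Cs) * lam * c)) * hpq
      rw [e]
      exact aux_lin_combo_lt h3x h3y hp hq hpq
    · rw [hsT]
      have e : lam * z * (p * x + q * y + Cs)
          = p * (lam * z * (x + Cs)) + q * (lam * z * (y + Cs)) := by
        linear_combination (-(lam * z * Cs)) * hpq
      rw [e]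
      exact aux_lin_combo_lt h4x h4y hp hq hpq
    · by_cases hij : i = j
      · subst hij
        have b5x := h5x i hi; have b5y := h5y i hi
        rw [Function.update_self] at b5x b5y ⊢
        have e : K i + (p * x + q * y) * lam * c
            = p * (K i + x * lam * c) + q * (K i + y * lam * c) := by
          linear_combination (-(K i)) * hpq
        rw [e]
        exact aux_lin_combo_lt b5x b5y hp hq hpq
      · rw [Function.update_of_ne hij]
        have b5x := h5x i hi
        rwa [Function.update_of_ne hij] at b5x
  have hposlc : (0 : ℝ) < lam * c := mul_pos hlam hc
  -- G term : strictly convex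
  have hF1 : StrictConvexOn ℝ S (fun t => Gfun lam c f (Function.update α j t)) := by
    have base := aux_inv_strict (a := lam * c) (b := f - (1 - Cs) * lam * c)
      hposlc.ne' hconvS hd1
    have s1 := aux_add_strict (aux_smul_strict (div_pos hf hlam) base)
      (convexOn_const (-(1 / lam)) hconvS)
    refine aux_strict_congr s1 ?_
    intro t ht
    have h := hd1 t ht
    have hpos2 : 0 < f - (1 - (t + Cs)) * lam * c := by nlinarith [h]
    simp only [Gfun, hsT]
    have h' : lam * c * t + (f - (1 - Cs) * lam * c) ≠ 0 := h.ne'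
    field_simp [hpos2.ne', h', hlam.ne']
    have hD : lam * c * t + (f - lam * c * (1 - Cs)) ≠ 0 := ne_of_gt (by linarith)
    rw [show f - lam * c * (1 - (t + Cs)) = lam * c * t + (f - lam * c * (1 - Cs)) by ring,
      div_add' _ _ _ hD]
    congr 1
    ring
  -- H term : convex
  have hF2 : ConvexOn ℝ S (fun t => Hfun lam z r Sbar (Function.update α j t)) := by
    have ha2 : (0 : ℝ) < lam * z := mul_pos hlam hz
    have base := (aux_inv_strict (a := -(lam * z)) (b := r - lam * z * Cs)
      (neg_ne_zero.mpr ha2.ne') hconvS hd2).convexOn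
    have hC2 : (0 : ℝ) ≤ Sbar * r ^ 3 / (2 * lam * z ^ 2) := by positivity
    have s1 := aux_add_convex (aux_smul_convex hC2 base)
      (aux_affine_convex hconvS (-(Sbar * r / (2 * z)) + z / r)
        (-(Sbar * r ^ 2 / (2 * lam * z ^ 2)) - Sbar * r / (2 * z) * Cs + z / r * Cs))
    refine aux_convex_congr s1 ?_
    intro t ht
    have h := hd2 t ht
    have hv : 1 - lam * z * (t + Cs) / r ≠ 0 := by
      have h0 : (0:ℝ) < (-(lam * z) * t + (r - lam * z * Cs)) / r := div_pos h hr
      have e : (-(lam * z) * t + (r - lam * z * Cs)) / r = 1 - lam * z * (t + Cs) / r := by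
        field_simp
        ring
      rw [e] at h0
      exact h0.ne'
    have hA : -(lam * z * t) + (r - lam * z * Cs) ≠ 0 := by nlinarith [h]
    have hB : r - lam * z * (t + Cs) ≠ 0 := by nlinarith [h]
    simp only [Hfun, hsT]
    field_simp [h.ne', hv, hA, hB, hlam.ne', hz.ne', hr.ne']
    ring
  -- linear w-term
  have e3 : ∀ t : ℝ, (∑ i, Function.update α j t i * w i)
      = w j * t + ∑ i ∈ Finset.univ \ {j}, α i * w i := by
    intro t
    rw [show (∑ i, Function.update α j t i * w i)
        = ∑ i, Function.update (fun i => α i * w i) j (t * w j) i from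
      Finset.sum_congr rfl fun i _ => by
        by_cases hij : i = j
        · subst hij; simp
        · simp [Function.update_of_ne hij]]
    rw [Finset.sum_update_of_mem (Finset.mem_univ j)]
    ring
  have hF3 : ConvexOn ℝ S (fun t => ∑ i, Function.update α j t i * w i) :=
    aux_convex_congr
      (aux_affine_convex hconvS (w j) (∑ i ∈ Finset.univ \ {j}, α i * w i))
      (fun t _ => (e3 t).symm)
  -- cloud term
  have hF4 : ConvexOn ℝ S (fun t => ∑ i ∈ Finset.univ.filter (fun i : Fin N => (i : ℕ) < Nc),
      Function.update α j t i * c / fOSP i) := by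
    by_cases hj : (j : ℕ) < Nc
    · have e4 : ∀ t : ℝ, (∑ i ∈ Finset.univ.filter (fun i : Fin N => (i : ℕ) < Nc),
          Function.update α j t i * c / fOSP i)
          = c / fOSP j * t + ∑ i ∈ (Finset.univ.filter (fun i : Fin N => (i : ℕ) < Nc)) \ {j},
              α i * c / fOSP i := by
        intro t
        rw [show (∑ i ∈ Finset.univ.filter (fun i : Fin N => (i : ℕ) < Nc),
              Function.update α j t i * c / fOSP i)
            = ∑ i ∈ Finset.univ.filter (fun i : Fin N => (i : ℕ) < Nc),
                Function.update (fun i => α i * c / fOSP i) j (t * c / fOSP j) i from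
          Finset.sum_congr rfl fun i _ => by
            by_cases hij : i = j
            · subst hij; simp
            · simp [Function.update_of_ne hij]]
        rw [Finset.sum_update_of_mem (Finset.mem_filter.mpr ⟨Finset.mem_univ j, hj⟩)]
        ring
      exact aux_convex_congr (aux_affine_convex hconvS _ _) (fun t _ => (e4 t).symm)
    · have e4 : ∀ t : ℝ, (∑ i ∈ Finset.univ.filter (fun i : Fin N => (i : ℕ) < Nc),
          Function.update α j t i * c / fOSP i)
          = ∑ i ∈ Finset.univ.filter (fun i : Fin N => (i : ℕ) < Nc), α i * c / fOSP i := by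
        intro t
        refine Finset.sum_congr rfl fun i hi => ?_
        have hij : i ≠ j := fun h => hj (h ▸ (Finset.mem_filter.mp hi).2)
        rw [Function.update_of_ne hij]
      exact aux_convex_congr (convexOn_const _ hconvS) (fun t _ => (e4 t).symm)
  -- edge term
  have hF5 : ConvexOn ℝ S (fun t => ∑ i ∈ Finset.univ.filter (fun i : Fin N => Nc ≤ (i : ℕ)),
      Function.update α j t i * c /
        (fOSP i - K i - Function.update α j t i * lam * c)) := by
    by_cases hj : Nc ≤ (j : ℕ)
    · have e5 : ∀ t : ℝ, (∑ i ∈ Finset.univ.filter (fun i : Fin N => Nc ≤ (i : ℕ)),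
          Function.update α j t i * c /
            (fOSP i - K i - Function.update α j t i * lam * c))
          = t * c / (fOSP j - K j - t * lam * c)
            + ∑ i ∈ (Finset.univ.filter (fun i : Fin N => Nc ≤ (i : ℕ))) \ {j},
                α i * c / (fOSP i - K i - α i * lam * c) := by
        intro t
        rw [show (∑ i ∈ Finset.univ.filter (fun i : Fin N => Nc ≤ (i : ℕ)),
              Function.update α j t i * c /
                (fOSP i - K i - Function.update α j t i * lam * c))
            = ∑ i ∈ Finset.univ.filter (fun i : Fin N => Nc ≤ (i : ℕ)),
                Function.update (fun i => α i * c / (fOSP i - K i - α i * lam * c)) j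
                  (t * c / (fOSP j - K j - t * lam * c)) i from
          Finset.sum_congr rfl fun i _ => by
            by_cases hij : i = j
            · subst hij; simp
            · simp [Function.update_of_ne hij]]
        rw [Finset.sum_update_of_mem (Finset.mem_filter.mpr ⟨Finset.mem_univ j, hj⟩)]
      have hFK : 0 < fOSP j - K j := sub_pos.mpr (hK j hj).2
      have base := (aux_inv_strict (a := -(lam * c)) (b := fOSP j - K j)
        (neg_ne_zero.mpr hposlc.ne') hconvS (hd3 hj)).convexOn
      have s1 := aux_add_convex (aux_smul_convex (div_pos hFK hlam).le base)
        (convexOn_const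
          ((∑ i ∈ (Finset.univ.filter (fun i : Fin N => Nc ≤ (i : ℕ))) \ {j},
              α i * c / (fOSP i - K i - α i * lam * c)) - 1 / lam) hconvS)
      refine aux_convex_congr s1 ?_
      intro t ht
      have h := hd3 hj t ht
      have hden : 0 < fOSP j - K j - t * lam * c := by nlinarith [h]
      beta_reduce
      rw [e5 t]
      generalize (∑ i ∈ (Finset.univ.filter (fun i : Fin N => Nc ≤ (i : ℕ))) \ {j},
          α i * c / (fOSP i - K i - α i * lam * c)) = C5
      have hne1 : -(lam * c) * t + (fOSP j - K j) ≠ 0 := h.ne'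
      have hne2 : fOSP j - K j - t * lam * c ≠ 0 := hden.ne'
      have hne3 : -(lam * c * t) + (fOSP j - K j) ≠ 0 := by nlinarith [h]
      field_simp [hne1, hne2, hne3, hlam.ne']
      have hY : fOSP j - K j - lam * c * t ≠ 0 := by nlinarith [h]
      field_simp
      ring
    · have e5 : ∀ t : ℝ, (∑ i ∈ Finset.univ.filter (fun i : Fin N => Nc ≤ (i : ℕ)),
          Function.update α j t i * c /
            (fOSP i - K i - Function.update α j t i * lam * c))
          = ∑ i ∈ Finset.univ.filter (fun i : Fin N => Nc ≤ (i : ℕ)),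
              α i * c / (fOSP i - K i - α i * lam * c) := by
        intro t
        refine Finset.sum_congr rfl fun i hi => ?_
        have hij : i ≠ j := fun h => hj (h ▸ (Finset.mem_filter.mp hi).2)
        rw [Function.update_of_ne hij]
      exact aux_convex_congr (convexOn_const _ hconvS) (fun t _ => (e5 t).symm)
  -- payment term
  have hF6 : ConvexOn ℝ S (fun t => Pfun lam c price (Function.update α j t)) := by
    have e6 : ∀ t : ℝ, Pfun lam c price (Function.update α j t)
        = price j * c * lam * t + ∑ i ∈ Finset.univ \ {j}, α i * price i * c * lam := by
      intro t
      show (∑ i, Function.update α j t i * price i * c * lam) = _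
      rw [show (∑ i, Function.update α j t i * price i * c * lam)
          = ∑ i, Function.update (fun i => α i * price i * c * lam) j
              (t * price j * c * lam) i from
        Finset.sum_congr rfl fun i _ => by
          by_cases hij : i = j
          · subst hij; simp
          · simp [Function.update_of_ne hij]]
      rw [Finset.sum_update_of_mem (Finset.mem_univ j)]
      ring
    exact aux_convex_congr
      (aux_affine_convex hconvS (price j * c * lam)
        (∑ i ∈ Finset.univ \ {j}, α i * price i * c * lam))
      (fun t _ => (e6 t).symm)
  -- positive coefficients
  have hcG : 0 < θD / DMAX + θE * εloc / EMAX := by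
    rcases lt_or_ge 0 θD with h | h
    · have h2 : 0 ≤ θE * εloc / EMAX := by positivity
      have h1 := div_pos h hDMAX
      linarith
    · have hθE' : 0 < θE := by nlinarith
      have h1 : 0 ≤ θD / DMAX := div_nonneg hθD hDMAX.le
      have h2 := div_pos (mul_pos hθE' hεloc) hEMAX
      linarith
  have hcH : 0 ≤ θD / DMAX + θE * εtx / EMAX := by positivity
  have hcD : 0 ≤ θD / DMAX := div_nonneg hθD hDMAX.le
  have hcP : 0 ≤ θP / PMAX := div_nonneg hθP hPMAX.le
  refine aux_strict_congr
    (aux_add_strict (aux_smul_strict hcG hF1)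
      (aux_add_convex (aux_smul_convex hcH hF2)
        (aux_add_convex
          (aux_smul_convex hcD (aux_add_convex hF3 (aux_add_convex hF4 hF5)))
          (aux_smul_convex hcP hF6)))) ?_
  intro t _
  simp only [Ufun, Dfun, Efun]
  ring

end
end
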